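/- The squared maximum mean discrepancy between probability distributions p and q over {0,1}^n, defined with the Gaussian kernel k(x,y) = exp(-||x-y||²/(2σ²)), equals E_{a∼P_σ}[(⟨Z_a⟩_p - ⟨Z_a⟩_q)²], where P_σ(a) = (1-p_σ)^{n-|a|} p_σ^{|a|} with p_σ = (1 - e^{-1/(2σ²)})/2, |a| the Hamming weight of a, and ⟨Z_a⟩_p = E_{x∼p}[(-1)^{x·a}]. -/

import Mathlib

open Finset Matrix

noncomputable section

abbrev Bits (n : ℕ) := Fin n → Bool

def bdot {n : ℕ} (a z : Bits n) : ℕ := (Finset.univ.filter fun i => a i ∧ z i).card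

def wt {n : ℕ} (a : Bits n) : ℕ := (Finset.univ.filter fun i => a i).card

def Zword {n : ℕ} (a : Bits n) : Matrix (Bits n) (Bits n) ℂ :=
  Matrix.diagonal fun z => (-1 : ℂ) ^ bdot a z

def Xword {n : ℕ} (g : Bits n) : Matrix (Bits n) (Bits n) ℂ :=
  Matrix.of fun x y => if (fun i => xor (y i) (g i)) = x then 1 else 0

def gateX {n : ℕ} (θ : ℝ) (g : Bits n) : Matrix (Bits n) (Bits n) ℂ :=
  NormedSpace.exp ((Complex.I * (θ : ℂ)) • Xword g)

def gateZ {n : ℕ} (θ : ℝ) (g : Bits n) : Matrix (Bits n) (Bits n) ℂ :=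
  NormedSpace.exp ((Complex.I * (θ : ℂ)) • Zword g)

def Ucirc {n m : ℕ} (θ : Fin m → ℝ) (g : Fin m → Bits n) : Matrix (Bits n) (Bits n) ℂ :=
  (List.ofFn fun j => gateX (θ j) (g j)).prod

def zeroBits (n : ℕ) : Bits n := fun _ => false

lemma pow_card_eq_prod {n : ℕ} (P : Fin n → Prop) [DecidablePred P] (c : ℝ) :
    c ^ (Finset.univ.filter P).card = ∏ i, if P i then c else 1 := by
  rw [← Finset.prod_const, Finset.prod_filter]

lemma key {n : ℕ} (t : ℝ) (x y : Bits n) :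
    ∑ a : Bits n, ((1 - (1-t)/2) ^ (n - wt a) * ((1-t)/2) ^ (wt a)) *
      ((-1:ℝ) ^ bdot a x * (-1:ℝ) ^ bdot a y) = t ^ (hammingDist x y) := by
  have step : ∀ a : Bits n,
      ((1 - (1-t)/2) ^ (n - wt a) * ((1-t)/2) ^ (wt a)) *
        ((-1:ℝ) ^ bdot a x * (-1:ℝ) ^ bdot a y)
      = ∏ i, ((if a i then (1-t)/2 else 1 - (1-t)/2) *
          ((if a i ∧ x i then (-1:ℝ) else 1) * (if a i ∧ y i then (-1:ℝ) else 1))) := by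
    intro a
    rw [Finset.prod_mul_distrib, Finset.prod_mul_distrib]
    have h1 : ∏ i, (if a i then (1-t)/2 else 1 - (1-t)/2)
        = (1 - (1-t)/2) ^ (n - wt a) * ((1-t)/2) ^ (wt a) := by
      rw [← Finset.prod_filter_mul_prod_filter_not Finset.univ (fun i => a i)]
      rw [Finset.prod_ite_of_true (by intro i hi; simpa using (Finset.mem_filter.mp hi).2),
        Finset.prod_ite_of_false (by intro i hi; simpa using (Finset.mem_filter.mp hi).2)]
      rw [Finset.prod_const, Finset.prod_const, mul_comm]
      congr 2
      have := Finset.card_filter_add_card_filter_not (s := (Finset.univ : Finset (Fin n)))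
        (p := fun i => a i = true)
      simp only [Finset.card_univ, Fintype.card_fin] at this
      unfold wt; omega
    rw [h1, ← pow_card_eq_prod, ← pow_card_eq_prod]
    rfl
  rw [Finset.sum_congr rfl (fun a _ => step a)]
  rw [← Fintype.prod_sum (fun (i : Fin n) (b : Bool) =>
    ((if b = true then (1 - t) / 2 else 1 - (1 - t) / 2) *
      ((if b = true ∧ x i = true then (-1:ℝ) else 1) * if b = true ∧ y i = true then -1 else 1)))]
  have hs : ∀ i : Fin n, (∑ b : Bool,
      ((if b = true then (1 - t) / 2 else 1 - (1 - t) / 2) *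
        ((if b = true ∧ x i = true then (-1:ℝ) else 1) * if b = true ∧ y i = true then -1 else 1)))
      = if x i ≠ y i then t else 1 := by
    intro i
    rw [Fintype.sum_bool]
    cases hx : x i <;> cases hy : y i <;> simp <;> ring
  rw [Finset.prod_congr rfl (fun i _ => hs i), ← Finset.prod_filter, Finset.prod_const]
  rfl

lemma expand_aux {n : ℕ} (P r s : Bits n → ℝ) :
    ∑ x : Bits n, ∑ y : Bits n,
        r x * s y * (∑ a : Bits n, P a * ((-1:ℝ)^bdot a x * (-1:ℝ)^bdot a y))
    = ∑ a : Bits n, P a * ((∑ x, r x * (-1:ℝ)^bdot a x) * (∑ y, s y * (-1:ℝ)^bdot a y)) := by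
  have h1 : ∀ x : Bits n,
      (∑ y : Bits n, r x * s y * (∑ a : Bits n, P a * ((-1:ℝ)^bdot a x * (-1:ℝ)^bdot a y)))
      = ∑ a : Bits n, (r x * (-1:ℝ)^bdot a x) * (P a * (∑ y, s y * (-1:ℝ)^bdot a y)) := by
    intro x
    simp only [Finset.mul_sum]
    rw [Finset.sum_comm]
    exact Finset.sum_congr rfl fun a _ => Finset.sum_congr rfl fun y _ => by ring
  rw [Finset.sum_congr rfl fun x _ => h1 x, Finset.sum_comm]
  refine Finset.sum_congr rfl fun a _ => ?_
  rw [← Finset.sum_mul]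
  ring


/-- the squared MMD with Gaussian kernel between distributions p, q on
{0,1}ⁿ equals E_{a∼P_σ}[(⟨Z_a⟩_p - ⟨Z_a⟩_q)²]. -/
theorem mmd_sq_eq_pauli_mixture {n : ℕ} (σ : ℝ) (hσ : 0 < σ) (p q : Bits n → ℝ)
    (hp0 : ∀ x, 0 ≤ p x) (hp1 : ∑ x, p x = 1)
    (hq0 : ∀ x, 0 ≤ q x) (hq1 : ∑ x, q x = 1) :
    let k : Bits n → Bits n → ℝ := fun x y =>
      Real.exp (-(hammingDist x y : ℝ) / (2 * σ ^ 2))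
    let pσ : ℝ := (1 - Real.exp (-(1 / (2 * σ ^ 2)))) / 2
    let Pσ : Bits n → ℝ := fun a => (1 - pσ) ^ (n - wt a) * pσ ^ (wt a)
    let ZP : (Bits n → ℝ) → Bits n → ℝ := fun r a => ∑ x, r x * (-1 : ℝ) ^ bdot a x
    (∑ x, ∑ y, p x * p y * k x y) - 2 * (∑ x, ∑ y, p x * q y * k x y)
        + (∑ x, ∑ y, q x * q y * k x y)
      = ∑ a : Bits n, Pσ a * (ZP p a - ZP q a) ^ 2 := by
  intro k pσ Pσ ZP
  have hk : ∀ x y : Bits n,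
      k x y = ∑ a : Bits n, Pσ a * ((-1:ℝ) ^ bdot a x * (-1:ℝ) ^ bdot a y) := by
    intro x y
    have h1 : k x y = (Real.exp (-(1 / (2 * σ ^ 2)))) ^ (hammingDist x y) := by
      show Real.exp (-(hammingDist x y : ℝ) / (2 * σ ^ 2)) = _
      rw [← Real.exp_nat_mul]
      congr 1; ring
    rw [h1, ← key (Real.exp (-(1 / (2 * σ ^ 2)))) x y]
  have expand : ∀ r s : Bits n → ℝ,
      (∑ x, ∑ y, r x * s y * k x y) = ∑ a : Bits n, Pσ a * (ZP r a * ZP s a) := by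
    intro r s
    simp only [hk]
    exact expand_aux Pσ r s
  rw [expand p p, expand p q, expand q q, Finset.mul_sum, ← Finset.sum_sub_distrib,
    ← Finset.sum_add_distrib]
  exact Finset.sum_congr rfl fun a _ => by ring
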